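/- Let (a_k)_{k∈ℕ} be a sequence of complex numbers such that ∑_{k=0}^∞ a_k converges in ℂ and ∑_{k=0}^∞ |a_k|² < ∞, let Ω := {z ∈ ℂ : a_k·z ≠ 1 for all k ∈ ℕ}, and let f : Ω → ℂ be defined by f(z) = ∑_{k=0}^∞ a_k/(1 − a_k·z). Then for every a ∈ ℂ with a ≠ 0, the set {k ∈ ℕ : a_k = a} is finite, and the function z ↦ (z − 1/a)·f(z) tends to −card{k ∈ ℕ : a_k = a} as z tends to 1/a within Ω. In particular f has a pole at 1/a exactly when a occurs among the a_k, and the residue there equals the negative of the number of indices k with a_k = a. -/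

import Mathlib

open Filter Topology

/-- Lemma 4.1 (pole/residue part): if `f z = ∑ a_k / (1 - a_k z)` on
`Ω = {z | ∀ k, a_k z ≠ 1}`, then for every `c ≠ 0` the set `{k | a_k = c}` is finite
and `(z - 1/c)·f(z) → -card{k | a_k = c}` as `z → 1/c` within `Ω`. -/
theorem stmt_1 (a : ℕ → ℂ)
    (hconv : ∃ S : ℂ, Tendsto (fun N => ∑ k ∈ Finset.range N, a k) atTop (𝓝 S))
    (hsq : Summable fun k => ‖a k‖ ^ 2)
    (f : ℂ → ℂ)
    (hf : ∀ z : ℂ, (∀ k, a k * z ≠ 1) →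
      Tendsto (fun N => ∑ k ∈ Finset.range N, a k / (1 - a k * z)) atTop (𝓝 (f z)))
    (c : ℂ) (hc : c ≠ 0) :
    {k : ℕ | a k = c}.Finite ∧
    Tendsto (fun z => (z - c⁻¹) * f z) (𝓝[{z : ℂ | ∀ k, a k * z ≠ 1}] c⁻¹)
      (𝓝 (-(Nat.card {k : ℕ | a k = c} : ℂ))) := by
  classical
  obtain ⟨S, hS⟩ := hconv
  -- terms tend to 0
  have h0 : Tendsto a atTop (𝓝 0) := by
    have h1 := (hS.comp (tendsto_add_atTop_nat 1)).sub hS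
    rw [sub_self] at h1
    simpa [Function.comp, Finset.sum_range_succ] using h1
  have h0n : Tendsto (fun k => ‖a k‖) atTop (𝓝 0) := by simpa using h0.norm
  -- finiteness
  have hcpos : (0:ℝ) < ‖c‖ := norm_pos_iff.mpr hc
  obtain ⟨K₀, hK₀⟩ := eventually_atTop.mp (h0n.eventually_lt_const hcpos)
  have hfin : {k : ℕ | a k = c}.Finite := by
    apply (Set.finite_Iio K₀).subset
    intro k hk
    by_contra hk'
    simp only [Set.mem_Iio, not_lt] at hk'
    have := hK₀ k hk'
    rw [Set.mem_setOf_eq.mp hk] at this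
    exact lt_irrefl _ this
  refine ⟨hfin, ?_⟩
  set s : Finset ℕ := hfin.toFinset with hs
  have hmem : ∀ k, k ∈ s ↔ a k = c := fun k => by simp [hs]
  set n : ℕ := s.card with hn
  have hcard : ((Nat.card {k : ℕ | a k = c} : ℂ)) = (n : ℂ) := by
    rw [Nat.card_coe_set_eq, Set.ncard_eq_toFinset_card _ hfin]
  rw [hcard]
  -- constants
  set R : ℝ := ‖(c⁻¹ : ℂ)‖ + 1 with hR
  have hR0 : (0:ℝ) < R := by positivity
  obtain ⟨K₁, hK₁⟩ := s.exists_nat_subset_range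
  obtain ⟨K₂, hK₂⟩ := eventually_atTop.mp (h0n.eventually_lt_const (by positivity : (0:ℝ) < 1/(2*R)))
  set K := max K₁ K₂ with hKdef
  obtain ⟨B, hB⟩ := (show Tendsto (fun N => ‖∑ k ∈ Finset.range N, a k‖) atTop (𝓝 ‖S‖) from hS.norm).bddAbove_range
  have hBb : ∀ N, ‖∑ k ∈ Finset.range N, a k‖ ≤ B := fun N => hB (Set.mem_range_self N)
  set T : ℝ := ∑' k, ‖a k‖^2 with hT
  -- head function
  set b : ℕ → ℂ → ℂ := fun k z => if a k = c then 0 else a k / (1 - a k * z) with hb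
  set hd : ℂ → ℂ := fun z => ∑ k ∈ Finset.range K, b k z with hhd
  have hden : ∀ k, a k ≠ c → (1 : ℂ) - a k * c⁻¹ ≠ 0 := by
    intro k hk h
    apply hk
    have h1 : a k * c⁻¹ = 1 := by linear_combination -h
    calc a k = a k * c⁻¹ * c := by field_simp
    _ = c := by rw [h1, one_mul]
  have hhdc : ContinuousAt hd c⁻¹ := by
    apply tendsto_finset_sum
    intro k _
    by_cases h : a k = c
    · simpa [hb, h] using (continuousAt_const : ContinuousAt (fun _ : ℂ => (0:ℂ)) c⁻¹)
    · simp only [hb, if_neg h]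
      exact ContinuousAt.div continuousAt_const
        ((continuous_const.sub (continuous_const.mul continuous_id)).continuousAt) (hden k h)
  set C1 : ℝ := ‖hd c⁻¹‖ + 1 with hC1
  have hevhd : ∀ᶠ z in 𝓝 c⁻¹, ‖hd z‖ ≤ C1 := by
    have h1 : Tendsto (fun z => ‖hd z‖) (𝓝 c⁻¹) (𝓝 ‖hd c⁻¹‖) := hhdc.norm
    exact (h1.eventually_lt_const (by simp [hC1])).mono fun z hz => le_of_lt hz
  have hevR : ∀ᶠ z : ℂ in 𝓝 c⁻¹, ‖z‖ ≤ R := by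
    have h1 : Tendsto (fun z : ℂ => ‖z‖) (𝓝 c⁻¹) (𝓝 ‖(c⁻¹:ℂ)‖) := continuous_norm.continuousAt
    exact (h1.eventually_lt_const (by simp [hR])).mono fun z hz => le_of_lt hz
  set C : ℝ := C1 + 2*B + 2*R*T with hC
  -- key bound
  have key : ∀ z : ℂ, (∀ k, a k * z ≠ 1) → ‖z‖ ≤ R → ‖hd z‖ ≤ C1 →
      ‖f z - n * (c / (1 - c*z))‖ ≤ C := by
    intro z hz hzR hzhd
    have hQtend : Tendsto (fun M => ∑ k ∈ Finset.range M, b k z) atTop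
        (𝓝 (f z - n * (c/(1-c*z)))) := by
      apply Tendsto.congr' _ ((hf z hz).sub tendsto_const_nhds)
      filter_upwards [eventually_ge_atTop K₁] with M hM
      have hsplit : ∑ k ∈ Finset.range M, a k / (1 - a k * z)
          = (∑ k ∈ Finset.range M, b k z)
            + ∑ k ∈ Finset.range M, (if a k = c then a k / (1 - a k * z) else 0) := by
        rw [← Finset.sum_add_distrib]
        apply Finset.sum_congr rfl
        intro k _
        by_cases h : a k = c <;> simp [hb, h]
      have hfl : (Finset.range M).filter (fun k => a k = c) = s := by
        ext k
        simp only [Finset.mem_filter, Finset.mem_range, hmem]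
        constructor
        · exact fun h => h.2
        · exact fun h => ⟨lt_of_lt_of_le (Finset.mem_range.mp (hK₁ ((hmem k).mpr h))) hM, h⟩
      have hfilter : ∑ k ∈ Finset.range M, (if a k = c then a k / (1 - a k * z) else 0)
          = (n:ℂ) * (c / (1 - c * z)) := by
        rw [← Finset.sum_filter, hfl,
          Finset.sum_congr rfl (fun k hk => by rw [(hmem k).mp hk])]
        simp [Finset.sum_const, hn, nsmul_eq_mul]
      rw [hsplit, hfilter]
      ring
    have hQb : ∀ M, K ≤ M → ‖∑ k ∈ Finset.range M, b k z‖ ≤ C := by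
      intro M hM
      have hsplit : ∑ k ∈ Finset.range M, b k z = hd z + ∑ k ∈ Finset.Ico K M, b k z :=
        (Finset.sum_range_add_sum_Ico _ hM).symm
      have hkc : ∀ k ∈ Finset.Ico K M, a k ≠ c := by
        intro k hk
        obtain ⟨hk1, _⟩ := Finset.mem_Ico.mp hk
        intro h
        have : k ∈ Finset.range K₁ := hK₁ ((hmem k).mpr h)
        have h2 := Finset.mem_range.mp this
        have h3 : K₁ ≤ K := le_max_left _ _
        omega
      have htail : ∑ k ∈ Finset.Ico K M, b k z
          = (∑ k ∈ Finset.Ico K M, a k) + ∑ k ∈ Finset.Ico K M, (a k)^2 * z / (1 - a k * z) := by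
        rw [← Finset.sum_add_distrib]
        apply Finset.sum_congr rfl
        intro k hk
        have hkc' := hkc k hk
        have hne : (1:ℂ) - a k * z ≠ 0 := sub_ne_zero_of_ne (Ne.symm (hz k))
        simp only [hb, if_neg hkc']
        field_simp
        ring
      have hden2 : ∀ k ∈ Finset.Ico K M, (1:ℝ)/2 ≤ ‖(1:ℂ) - a k * z‖ := by
        intro k hk
        obtain ⟨hk1, _⟩ := Finset.mem_Ico.mp hk
        have hk2 : K₂ ≤ k := le_trans (le_max_right _ _) hk1
        have hak : ‖a k‖ ≤ 1/(2*R) := le_of_lt (hK₂ k hk2)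
        have h1 : ‖a k * z‖ ≤ 1/2 := by
          rw [norm_mul]
          calc ‖a k‖ * ‖z‖ ≤ (1/(2*R)) * R :=
                mul_le_mul hak hzR (norm_nonneg _) (by positivity)
          _ = 1/2 := by field_simp
        calc (1:ℝ)/2 = 1 - 1/2 := by norm_num
        _ ≤ ‖(1:ℂ)‖ - ‖a k * z‖ := by rw [norm_one]; linarith
        _ ≤ ‖(1:ℂ) - a k * z‖ := norm_sub_norm_le _ _
      have hterm : ∀ k ∈ Finset.Ico K M, ‖(a k)^2 * z / (1 - a k * z)‖ ≤ 2*R*‖a k‖^2 := by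
        intro k hk
        rw [norm_div, norm_mul, norm_pow]
        have h1 : ‖a k‖^2 * ‖z‖ ≤ ‖a k‖^2 * R :=
          mul_le_mul_of_nonneg_left hzR (sq_nonneg _)
        have h2 := hden2 k hk
        calc ‖a k‖^2 * ‖z‖ / ‖(1:ℂ) - a k * z‖ ≤ (‖a k‖^2 * R) / (1/2) :=
              div_le_div₀ (by positivity) h1 (by norm_num) h2
        _ = 2*R*‖a k‖^2 := by ring
      have h3 : ‖∑ k ∈ Finset.Ico K M, (a k)^2 * z / (1 - a k * z)‖ ≤ 2*R*T := by
        calc ‖∑ k ∈ Finset.Ico K M, (a k)^2 * z / (1 - a k * z)‖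
            ≤ ∑ k ∈ Finset.Ico K M, ‖(a k)^2 * z / (1 - a k * z)‖ := norm_sum_le _ _
        _ ≤ ∑ k ∈ Finset.Ico K M, 2*R*‖a k‖^2 := Finset.sum_le_sum hterm
        _ = 2*R * ∑ k ∈ Finset.Ico K M, ‖a k‖^2 := by rw [Finset.mul_sum]
        _ ≤ 2*R*T := by
            apply mul_le_mul_of_nonneg_left _ (by positivity)
            exact Summable.sum_le_tsum _ (fun i _ => sq_nonneg _) hsq
      have h4 : ‖∑ k ∈ Finset.Ico K M, a k‖ ≤ 2*B := by
        rw [Finset.sum_Ico_eq_sub _ hM]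
        calc ‖∑ k ∈ Finset.range M, a k - ∑ k ∈ Finset.range K, a k‖
            ≤ ‖∑ k ∈ Finset.range M, a k‖ + ‖∑ k ∈ Finset.range K, a k‖ := norm_sub_le _ _
        _ ≤ B + B := add_le_add (hBb M) (hBb K)
        _ = 2*B := by ring
      rw [hsplit, htail, ← add_assoc]
      calc ‖hd z + (∑ k ∈ Finset.Ico K M, a k)
              + ∑ k ∈ Finset.Ico K M, (a k)^2 * z / (1 - a k * z)‖
          ≤ ‖hd z‖ + ‖∑ k ∈ Finset.Ico K M, a k‖
              + ‖∑ k ∈ Finset.Ico K M, (a k)^2 * z / (1 - a k * z)‖ := norm_add₃_le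
        _ ≤ C1 + 2*B + 2*R*T := add_le_add (add_le_add hzhd h4) h3
        _ = C := rfl
    exact le_of_tendsto hQtend.norm (eventually_atTop.mpr ⟨K, hQb⟩)
  -- final assembly
  have hGtend : Tendsto (fun z => (z - c⁻¹) * (f z - n * (c/(1-c*z))))
      (𝓝[{z : ℂ | ∀ k, a k * z ≠ 1}] c⁻¹) (𝓝 0) := by
    apply squeeze_zero_norm' (a := fun z => ‖z - c⁻¹‖ * C)
    · filter_upwards [self_mem_nhdsWithin, hevR.filter_mono nhdsWithin_le_nhds,
        hevhd.filter_mono nhdsWithin_le_nhds] with z hzΩ hzR hzhd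
      rw [norm_mul]
      exact mul_le_mul_of_nonneg_left (key z hzΩ hzR hzhd) (norm_nonneg _)
    · have h1 : Tendsto (fun z : ℂ => z - c⁻¹)
          (𝓝[{z : ℂ | ∀ k, a k * z ≠ 1}] c⁻¹) (𝓝 0) :=
        ((continuous_id.sub continuous_const).tendsto' c⁻¹ 0 (by simp)).mono_left
          nhdsWithin_le_nhds
      simpa using h1.norm.mul_const C
  have hfinal := (tendsto_const_nhds (x := -(n:ℂ))).add hGtend
  rw [add_zero] at hfinal
  apply hfinal.congr'
  filter_upwards [self_mem_nhdsWithin] with z hzΩ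
  rcases Nat.eq_zero_or_pos n with h | h
  · simp [h]
  · obtain ⟨k, hk⟩ := Finset.card_pos.mp h
    have hkc : a k = c := (hmem k).mp hk
    have hcz : c * z ≠ 1 := by rw [← hkc]; exact hzΩ k
    have h1 : (1:ℂ) - c*z ≠ 0 := sub_ne_zero_of_ne (Ne.symm hcz)
    have h2 : (z - c⁻¹) * (c / (1 - c*z)) = -1 := by
      rw [sub_mul, div_eq_mul_inv, ← mul_assoc, ← mul_assoc, inv_mul_cancel₀ hc, one_mul,
        ← sub_one_mul, mul_comm z c, ← neg_sub, neg_mul, mul_inv_cancel₀ h1]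
    linear_combination -(n:ℂ) * h2
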